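/- Let s, t ≥ 2 be natural numbers and θ' = t·(2s−1). Define the subsets of ℕ: A = (⋃_{l'=0}^{t−2} {n : θ'·l' ≤ n ≤ (l'+1)·θ' − t·s}) ∪ {n : n ≥ (t−1)·θ'} and B = (⋃_{l''=0}^{t−2} {n : t·s + θ'·l'' ≤ n ≤ (l''+1)·θ' − t}) ∪ {n : n ≥ t·s + (t−1)·θ'}. Then A ∩ B = {n : n ≥ t·s + (t−1)·θ'}. -/
import Mathlib

lemma polydot_aux1 (a b P θ t n : ℕ) (h1 : a ≤ b) (h2 : P + b ≤ n)
    (h3 : n ≤ a + θ - P) (h4 : θ + t = 2 * P) (h5 : 2 ≤ t) : False := by omega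

lemma polydot_aux2 (a c t n : ℕ) (h1 : a ≤ n) (h2 : n ≤ c - t)
    (h3 : c ≤ a) (h4 : t ≤ c) (h5 : 2 ≤ t) : False := by omega

lemma polydot_aux3 (X Y P n : ℕ) (h1 : n ≤ X - P) (h2 : X ≤ Y)
    (h3 : P + Y ≤ n) (h5 : 2 ≤ P) : False := by omega

/-- For s, t ≥ 2 and θ' = t·(2s−1), the intersection of the
admissible-power sets
A = (⋃_{l'<t−1} [θ'·l', (l'+1)·θ' − t·s]) ∪ [(t−1)·θ', ∞) and
B = (⋃_{l''<t−1} [t·s + θ'·l'', (l''+1)·θ' − t]) ∪ [t·s + (t−1)·θ', ∞)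
is exactly [t·s + (t−1)·θ', ∞). -/
theorem polydot_PSB_admissible_intersection (s t : ℕ) (hs : 2 ≤ s) (ht : 2 ≤ t) :
    (({n : ℕ | ∃ l', l' < t - 1 ∧ (t * (2 * s - 1)) * l' ≤ n ∧
          n ≤ (l' + 1) * (t * (2 * s - 1)) - t * s} ∪
      {n : ℕ | (t - 1) * (t * (2 * s - 1)) ≤ n}) ∩
     ({n : ℕ | ∃ l'', l'' < t - 1 ∧ t * s + (t * (2 * s - 1)) * l'' ≤ n ∧
          n ≤ (l'' + 1) * (t * (2 * s - 1)) - t} ∪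
      {n : ℕ | t * s + (t - 1) * (t * (2 * s - 1)) ≤ n}))
      = {n : ℕ | t * s + (t - 1) * (t * (2 * s - 1)) ≤ n} := by
  have h1 : 2 * s - 1 + 1 = 2 * s := by omega
  have hθ : t * (2 * s - 1) + t = 2 * (t * s) := by
    calc t * (2 * s - 1) + t = t * (2 * s - 1) + t * 1 := by rw [mul_one]
      _ = t * (2 * s - 1 + 1) := (mul_add t _ 1).symm
      _ = 2 * (t * s) := by rw [h1]; ring
  have hts : 2 ≤ t * s := le_trans (by norm_num) (Nat.mul_le_mul ht hs)
  have htθ : t ≤ t * (2 * s - 1) := Nat.le_mul_of_pos_right t (by omega)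
  ext n
  simp only [Set.mem_inter_iff, Set.mem_union, Set.mem_setOf_eq]
  constructor
  · rintro ⟨hA | hA, hB | hB⟩
    · obtain ⟨l', hl', ha1, ha2⟩ := hA
      obtain ⟨l'', hl'', hb1, hb2⟩ := hB
      exfalso
      rcases le_or_gt l' l'' with h | h
      · have hm : t * (2 * s - 1) * l' ≤ t * (2 * s - 1) * l'' :=
          Nat.mul_le_mul_left _ h
        have he : (l' + 1) * (t * (2 * s - 1))
            = t * (2 * s - 1) * l' + t * (2 * s - 1) := by ring
        rw [he] at ha2
        exact polydot_aux1 _ _ _ _ _ _ hm hb1 ha2 hθ ht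
      · have hm : (l'' + 1) * (t * (2 * s - 1)) ≤ t * (2 * s - 1) * l' := by
          calc (l'' + 1) * (t * (2 * s - 1)) = t * (2 * s - 1) * (l'' + 1) := by ring
            _ ≤ t * (2 * s - 1) * l' := Nat.mul_le_mul_left _ (by omega)
        have htc : t ≤ (l'' + 1) * (t * (2 * s - 1)) :=
          le_trans htθ (Nat.le_mul_of_pos_left _ (by omega))
        exact polydot_aux2 _ _ _ _ ha1 hb2 hm htc ht
    · obtain ⟨l', hl', ha1, ha2⟩ := hA
      exfalso
      have hm : (l' + 1) * (t * (2 * s - 1)) ≤ (t - 1) * (t * (2 * s - 1)) :=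
        Nat.mul_le_mul_right _ (by omega)
      exact polydot_aux3 _ _ _ _ ha2 hm hB hts
    · obtain ⟨l'', hl'', hb1, hb2⟩ := hB
      exfalso
      have hm : (l'' + 1) * (t * (2 * s - 1)) ≤ (t - 1) * (t * (2 * s - 1)) :=
        Nat.mul_le_mul_right _ (by omega)
      have htc : t ≤ (l'' + 1) * (t * (2 * s - 1)) :=
        le_trans htθ (Nat.le_mul_of_pos_left _ (by omega))
      exact polydot_aux2 _ _ _ _ hA hb2 hm htc ht
    · exact hB
  · intro h
    exact ⟨Or.inr (le_trans (Nat.le_add_left _ _) h), Or.inr h⟩
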